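/- For every positive integer k and every complex number z, (z-1) times the expression 1 + 1!/(z+2) + 2!/((z+2)(z+3)) + ... + k!/((z+2)...(z+k+1)) times z(z+2)(z+3)...(z+k+1) equals (z+1)(z+2)...(z+k+1) - (k+1)!; equivalently, as polynomials, z * sum_{i=0}^{k} i! * prod_{j=i+2}^{k+1}(z+j) = prod_{j=1}^{k+1}(z+j) - (k+1)!. -/
import Mathlib

lemma aux_stmt_1 (k : ℕ) (z : ℂ) :
    z * ∑ i ∈ Finset.range (k + 1),
        (Nat.factorial i : ℂ) * ∏ j ∈ Finset.Icc (i + 2) (k + 1), (z + (j : ℂ)) =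
      ∏ j ∈ Finset.Icc 1 (k + 1), (z + (j : ℂ)) - (Nat.factorial (k + 1) : ℂ) := by
  induction k with
  | zero => simp [Nat.factorial]
  | succ n ih =>
    rw [Finset.sum_range_succ]
    have hs : ∀ i ∈ Finset.range (n + 1),
        (Nat.factorial i : ℂ) * ∏ j ∈ Finset.Icc (i + 2) (n + 2), (z + (j : ℂ)) =
        ((Nat.factorial i : ℂ) * ∏ j ∈ Finset.Icc (i + 2) (n + 1), (z + (j : ℂ))) *
          (z + ((n + 2 : ℕ) : ℂ)) := by
      intro i hi
      rw [Finset.mem_range] at hi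
      rw [show n + 2 = (n + 1) + 1 from rfl, Finset.prod_Icc_succ_top (by omega)]
      ring
    rw [Finset.sum_congr rfl hs, ← Finset.sum_mul]
    rw [show Finset.Icc ((n + 1) + 2) (n + 2) = ∅ by
      apply Finset.Icc_eq_empty; omega]
    rw [show Finset.Icc 1 (n + 2) = Finset.Icc 1 ((n + 1) + 1) from rfl,
      Finset.prod_Icc_succ_top (by omega)]
    have key : z * ∑ i ∈ Finset.range (n + 1),
        (Nat.factorial i : ℂ) * ∏ j ∈ Finset.Icc (i + 2) (n + 1), (z + (j : ℂ)) =
        ∏ j ∈ Finset.Icc 1 (n + 1), (z + (j : ℂ)) - (Nat.factorial (n + 1) : ℂ) := ih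
    simp only [Finset.prod_empty, mul_one]
    rw [Nat.factorial_succ (n + 1)]
    push_cast at key ⊢
    linear_combination (z + ((n : ℂ) + 2)) * key

theorem stmt_1 (k : ℕ) (hk : 0 < k) (z : ℂ) :
    z * ∑ i ∈ Finset.range (k + 1),
        (Nat.factorial i : ℂ) * ∏ j ∈ Finset.Icc (i + 2) (k + 1), (z + (j : ℂ)) =
      ∏ j ∈ Finset.Icc 1 (k + 1), (z + (j : ℂ)) - (Nat.factorial (k + 1) : ℂ) := by
  exact aux_stmt_1 k z
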